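/- Let n ≥ 2, let E be the set of 2-element subsets of [n], and let e₁ = {1,2}. For all i, j ∈ E, one has (v_{e₁}+v_i+v_j)! · b_{v_{e₁}+v_i+v_j} = (1/|e₁ ∪ i ∪ j|) · (1/|e₁ ∪ i| + 1/|e₁ ∪ j| + 1/|i ∪ j|), where for α ∈ ℕ^E one writes α! = ∏_{e∈E} α_e!. -/

import Mathlib

open Finset
open scoped Classical

/-- The 2-element subsets ("edges") of `[n] = {1,…,n}`, modeled inside `ℕ`. -/
def edgesN (n : ℕ) : Finset (Finset ℕ) := (Finset.Icc 1 n).powersetCard 2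

/-- `b_α = Σ ∏_{i=1}^d 1/|e_1 ∪ ⋯ ∪ e_i|`, the sum over all `d`-tuples of edges of `[n]`
in which each edge `e` occurs exactly `α e` times. -/
noncomputable def bcoef (n d : ℕ) (α : Finset ℕ → ℕ) : ℝ :=
  ∑ t : Fin d → ↥(edgesN n),
    if (∀ e : Finset ℕ, (Finset.univ.filter fun i => (t i).1 = e).card = α e) then
      ∏ i : Fin d,
        (1 : ℝ) / ((((Finset.univ.filter fun j : Fin d => j ≤ i)).biUnion
          fun j => (t j).1).card : ℝ)
    else 0

/-- The standard unit vector `v_e ∈ ℕ^E`. -/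
def vunit (e : Finset ℕ) : Finset ℕ → ℕ := fun f => if f = e then 1 else 0

section helpers

lemma pair_perm {γ : Type*} {b c y z : γ} (h : ({b, c} : Multiset γ) = {y, z}) :
    (b = y ∧ c = z) ∨ (b = z ∧ c = y) := by
  rcases Multiset.cons_eq_cons.mp h with ⟨h1, h2⟩ | ⟨hne, cs, h1, h2⟩
  · exact Or.inl ⟨h1, Multiset.singleton_inj.mp h2⟩
  · rcases (Multiset.singleton_eq_cons_iff _).mp h1 with ⟨hcy, hcs⟩
    subst hcs
    rcases (Multiset.singleton_eq_cons_iff _).mp h2 with ⟨hzb, -⟩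
    exact Or.inr ⟨hzb.symm, hcy⟩

lemma triple_perm {γ : Type*} {a b c x y z : γ} (h : ({a, b, c} : Multiset γ) = {x, y, z}) :
    (a = x ∧ b = y ∧ c = z) ∨ (a = x ∧ b = z ∧ c = y) ∨ (a = y ∧ b = x ∧ c = z) ∨
      (a = y ∧ b = z ∧ c = x) ∨ (a = z ∧ b = x ∧ c = y) ∨ (a = z ∧ b = y ∧ c = x) := by
  rcases Multiset.cons_eq_cons.mp h with ⟨h1, h2⟩ | ⟨hne, cs, h1, h2⟩
  · rcases pair_perm h2 with ⟨hb, hc⟩ | ⟨hb, hc⟩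
    · exact Or.inl ⟨h1, hb, hc⟩
    · exact Or.inr (Or.inl ⟨h1, hb, hc⟩)
  · have hcard := congrArg Multiset.card h1
    simp at hcard
    rcases Multiset.card_eq_one.mp hcard with ⟨d, rfl⟩
    rcases pair_perm h1 with ⟨hb, hc⟩ | ⟨hb, hc⟩ <;>
        rcases pair_perm h2 with ⟨hy, hz⟩ | ⟨hy, hz⟩
    · exact Or.inr (Or.inr (Or.inl ⟨hy.symm, hb, hc.trans hz.symm⟩))
    · exact Or.inr (Or.inr (Or.inr (Or.inr (Or.inl ⟨hz.symm, hb, hc.trans hy.symm⟩))))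
    · exact Or.inr (Or.inr (Or.inr (Or.inl ⟨hy.symm, hb.trans hz.symm, hc⟩)))
    · exact Or.inr (Or.inr (Or.inr (Or.inr (Or.inr ⟨hz.symm, hb.trans hy.symm, hc⟩))))

lemma count_to_multiset {γ : Type*} [DecidableEq γ] {a b c x y z : γ}
    (h : ∀ e : γ, ((if a = e then 1 else 0) + (if b = e then 1 else 0) +
        (if c = e then 1 else 0) : ℕ)
      = (if e = x then 1 else 0) + (if e = y then 1 else 0) + (if e = z then 1 else 0)) :
    ({a, b, c} : Multiset γ) = {x, y, z} := by
  refine Multiset.ext.mpr fun e => ?_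
  have he := h e
  simp only [Multiset.insert_eq_cons, Multiset.count_cons, Multiset.count_singleton,
    eq_comm] at he ⊢
  split_ifs at he ⊢ <;> omega

def eqv3 (β : Type*) : (β × β × β) ≃ (Fin 3 → β) where
  toFun p := ![p.1, p.2.1, p.2.2]
  invFun t := (t 0, t 1, t 2)
  left_inv := by rintro ⟨a, b, c⟩; rfl
  right_inv := by intro t; funext k; fin_cases k <;> rfl

@[simp] lemma eqv3_apply {β : Type*} (p : β × β × β) (k : Fin 3) :
    eqv3 β p k = ![p.1, p.2.1, p.2.2] k := rfl

lemma bcoef3 (n : ℕ) (α : Finset ℕ → ℕ) :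
    bcoef n 3 α = ∑ a : ↥(edgesN n), ∑ b : ↥(edgesN n), ∑ c : ↥(edgesN n),
      if (∀ e : Finset ℕ, ((if (a : Finset ℕ) = e then 1 else 0) +
            (if (b : Finset ℕ) = e then 1 else 0) +
            (if (c : Finset ℕ) = e then 1 else 0) : ℕ) = α e) then
        (1 / (((a : Finset ℕ)).card : ℝ)) * (1 / (((a : Finset ℕ) ∪ b).card : ℝ)) *
          (1 / (((a : Finset ℕ) ∪ b ∪ c).card : ℝ))
      else 0 := by
  classical
  rw [bcoef, ← Equiv.sum_comp (eqv3 ↥(edgesN n)), Fintype.sum_prod_type]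
  refine Finset.sum_congr rfl fun a _ => ?_
  rw [Fintype.sum_prod_type]
  refine Finset.sum_congr rfl fun b _ => ?_
  refine Finset.sum_congr rfl fun c _ => ?_
  have hf0 : (Finset.univ.filter fun j : Fin 3 => j ≤ 0) = {0} := by decide
  have hf1 : (Finset.univ.filter fun j : Fin 3 => j ≤ 1) = {0, 1} := by decide
  have hf2 : (Finset.univ.filter fun j : Fin 3 => j ≤ 2) = {0, 1, 2} := by decide
  congr 1
  · refine propext (forall_congr' fun e => ?_)
    rw [Finset.card_filter, Fin.sum_univ_three]
    simp
    exact iff_of_eq (by congr!)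
  · rw [Fin.prod_univ_three, hf0, hf1, hf2]
    simp [Finset.union_assoc]

end helpers

set_option maxHeartbeats 1000000 in
/-- **Example (d = 3):** with `e₁ = {1,2}`, for all edges `i, j` of `[n]`,
`(v_{e₁}+v_i+v_j)! · b_{v_{e₁}+v_i+v_j}
  = (1/|e₁∪i∪j|) · (1/|e₁∪i| + 1/|e₁∪j| + 1/|i∪j|)`. -/
theorem bcoef_d3_formula (n : ℕ) (hn : 2 ≤ n) :
    ∀ i ∈ edgesN n, ∀ j ∈ edgesN n,
      ((∏ e ∈ edgesN n,
          Nat.factorial (vunit {1, 2} e + vunit i e + vunit j e) : ℕ) : ℝ) *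
          bcoef n 3 (fun e => vunit {1, 2} e + vunit i e + vunit j e)
        = (1 / ((({1, 2} : Finset ℕ) ∪ i ∪ j).card : ℝ)) *
            (1 / ((({1, 2} : Finset ℕ) ∪ i).card : ℝ)
              + 1 / ((({1, 2} : Finset ℕ) ∪ j).card : ℝ)
              + 1 / (((i ∪ j).card : ℕ) : ℝ)) := by
  classical
  intro i hi j hj
  have he1 : ({1, 2} : Finset ℕ) ∈ edgesN n := by
    rw [edgesN, Finset.mem_powersetCard]
    constructor
    · intro x hx
      simp only [Finset.mem_insert, Finset.mem_singleton] at hx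
      rcases hx with rfl | rfl <;> simp [Finset.mem_Icc] <;> omega
    · decide
  set A : ↥(edgesN n) := ⟨{1, 2}, he1⟩ with hA
  set B : ↥(edgesN n) := ⟨i, hi⟩ with hB
  set C : ↥(edgesN n) := ⟨j, hj⟩ with hC
  set S : Finset (↥(edgesN n) × ↥(edgesN n) × ↥(edgesN n)) :=
    {(A, B, C), (A, C, B), (B, A, C), (B, C, A), (C, A, B), (C, B, A)} with hS
  -- the condition is membership in S
  have hcond : ∀ a b c : ↥(edgesN n),
      (∀ e : Finset ℕ, ((if (a : Finset ℕ) = e then 1 else 0) +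
            (if (b : Finset ℕ) = e then 1 else 0) +
            (if (c : Finset ℕ) = e then 1 else 0) : ℕ)
          = vunit {1, 2} e + vunit i e + vunit j e)
        ↔ (a, b, c) ∈ S := by
    intro a b c
    constructor
    · intro h
      have h' : ∀ e : Finset ℕ, ((if (a : Finset ℕ) = e then 1 else 0) +
            (if (b : Finset ℕ) = e then 1 else 0) +
            (if (c : Finset ℕ) = e then 1 else 0) : ℕ)
          = (if e = ({1, 2} : Finset ℕ) then 1 else 0) + (if e = i then 1 else 0) +
            (if e = j then 1 else 0) := by
        intro e; have := h e; simpa [vunit] using this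
      have hm := triple_perm (count_to_multiset h')
      simp only [hS, Finset.mem_insert, Finset.mem_singleton, Prod.mk.injEq,
        Subtype.ext_iff, hA, hB, hC]
      tauto
    · intro h
      simp only [hS, Finset.mem_insert, Finset.mem_singleton, Prod.mk.injEq,
        Subtype.ext_iff, hA, hB, hC] at h
      rcases h with ⟨ha, hb, hc⟩ | ⟨ha, hb, hc⟩ | ⟨ha, hb, hc⟩ | ⟨ha, hb, hc⟩ |
        ⟨ha, hb, hc⟩ | ⟨ha, hb, hc⟩ <;>
        (intro e; rw [ha, hb, hc]; simp only [vunit, eq_comm];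
          try (split_ifs <;> omega))
  rw [bcoef3]
  have hsum : (∑ a : ↥(edgesN n), ∑ b : ↥(edgesN n), ∑ c : ↥(edgesN n),
      if (∀ e : Finset ℕ, ((if (a : Finset ℕ) = e then 1 else 0) +
            (if (b : Finset ℕ) = e then 1 else 0) +
            (if (c : Finset ℕ) = e then 1 else 0) : ℕ)
          = vunit {1, 2} e + vunit i e + vunit j e) then
        (1 / (((a : Finset ℕ)).card : ℝ)) * (1 / (((a : Finset ℕ) ∪ b).card : ℝ)) *
          (1 / (((a : Finset ℕ) ∪ b ∪ c).card : ℝ))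
      else 0)
      = ∑ p ∈ S, (1 / (((p.1 : Finset ℕ)).card : ℝ)) *
          (1 / (((p.1 : Finset ℕ) ∪ p.2.1).card : ℝ)) *
          (1 / (((p.1 : Finset ℕ) ∪ p.2.1 ∪ p.2.2).card : ℝ)) := by
    rw [← Finset.univ_inter S, ← Finset.sum_ite_mem]
    rw [Fintype.sum_prod_type]
    refine Finset.sum_congr rfl fun a _ => ?_
    rw [Fintype.sum_prod_type]
    refine Finset.sum_congr rfl fun b _ => ?_
    refine Finset.sum_congr rfl fun c _ => ?_
    exact if_congr (hcond a b c) rfl rfl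
  rw [hsum]
  have hi' := hi
  have hj' := hj
  rw [edgesN, Finset.mem_powersetCard] at hi' hj'
  have hicard : i.card = 2 := hi'.2
  have hjcard : j.card = 2 := hj'.2
  have h12card : ({1, 2} : Finset ℕ).card = 2 := by decide
  by_cases hij : i = j
  · subst hij
    have hCB : C = B := Subtype.ext rfl
    by_cases h1 : i = {1, 2}
    · subst h1
      have hBA : B = A := Subtype.ext rfl
      have hSS : S = {(A, A, A)} := by
        rw [hS, hCB, hBA]; simp
      have hfac : (∏ e ∈ edgesN n,
          (vunit {1, 2} e + vunit {1, 2} e + vunit {1, 2} e).factorial) = 6 := by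
        rw [Finset.prod_eq_single_of_mem {1, 2} he1 (fun b _ hb => by simp [vunit, hb])]
        simp [vunit, Nat.factorial]
      rw [hSS, Finset.sum_singleton, hfac]
      simp only [hA]
      simp [Finset.union_self, h12card]
      norm_num
    · have hAB : A ≠ B := fun h => h1 ((congrArg Subtype.val h).symm)
      have hSS : S = {(A, B, B), (B, A, B), (B, B, A)} := by
        rw [hS, hCB]; ext p; simp; try tauto
      have hfac : (∏ e ∈ edgesN n,
          (vunit {1, 2} e + vunit i e + vunit i e).factorial) = 2 := by
        rw [Finset.prod_eq_single_of_mem i hi (fun b _ hb => by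
          simp [vunit, hb]; try (split_ifs <;> simp [Nat.factorial]))]
        simp [vunit, h1, Nat.factorial]
      rw [hSS, hfac,
        Finset.sum_insert (by simp [hAB, hAB.symm]),
        Finset.sum_insert (by simp [hAB, hAB.symm]),
        Finset.sum_singleton]
      simp only [hA, hB]
      simp [Finset.union_self, Finset.union_comm, Finset.union_left_comm,
        Finset.union_assoc, h12card, hicard]
      ring
  · by_cases h1 : i = {1, 2}
    · subst h1
      have hBA : B = A := Subtype.ext rfl
      have hAC : A ≠ C := fun h => hij ((congrArg Subtype.val h))
      have hSS : S = {(A, A, C), (A, C, A), (C, A, A)} := by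
        rw [hS, hBA]; ext p; simp; try tauto
      have hfac : (∏ e ∈ edgesN n,
          (vunit {1, 2} e + vunit {1, 2} e + vunit j e).factorial) = 2 := by
        rw [Finset.prod_eq_single_of_mem {1, 2} he1 (fun b _ hb => by
          simp [vunit, hb]; try (split_ifs <;> simp [Nat.factorial]))]
        simp [vunit, hij, Nat.factorial]
      rw [hSS, hfac,
        Finset.sum_insert (by simp [hAC, hAC.symm]),
        Finset.sum_insert (by simp [hAC, hAC.symm]),
        Finset.sum_singleton]
      simp only [hA, hC]
      simp [Finset.union_self, Finset.union_comm, Finset.union_left_comm,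
        Finset.union_assoc, h12card, hjcard]
      ring
    · by_cases h2 : j = {1, 2}
      · subst h2
        have hCA : C = A := Subtype.ext rfl
        have hAB : A ≠ B := fun h => h1 ((congrArg Subtype.val h).symm)
        have hSS : S = {(A, B, A), (A, A, B), (B, A, A)} := by
          rw [hS, hCA]; ext p; simp; try tauto
        have hfac : (∏ e ∈ edgesN n,
            (vunit {1, 2} e + vunit i e + vunit {1, 2} e).factorial) = 2 := by
          rw [Finset.prod_eq_single_of_mem {1, 2} he1 (fun b _ hb => by
            simp [vunit, hb]; try (split_ifs <;> simp [Nat.factorial]))]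
          have h1' : ¬({1, 2} : Finset ℕ) = i := fun h => h1 h.symm
          simp [vunit, h1', Nat.factorial]
        rw [hSS, hfac,
          Finset.sum_insert (by simp [hAB, hAB.symm]),
          Finset.sum_insert (by simp [hAB, hAB.symm]),
          Finset.sum_singleton]
        simp only [hA, hB]
        simp [Finset.union_self, Finset.union_comm, Finset.union_left_comm,
          Finset.union_assoc, h12card, hicard]
        ring
      · have hAB : A ≠ B := fun h => h1 ((congrArg Subtype.val h).symm)
        have hAC : A ≠ C := fun h => h2 ((congrArg Subtype.val h).symm)
        have hBC : B ≠ C := fun h => hij ((congrArg Subtype.val h))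
        have h1' : ¬({1, 2} : Finset ℕ) = i := fun h => h1 h.symm
        have h2' : ¬({1, 2} : Finset ℕ) = j := fun h => h2 h.symm
        have hij' : ¬j = i := fun h => hij h.symm
        have hfac : (∏ e ∈ edgesN n,
            (vunit {1, 2} e + vunit i e + vunit j e).factorial) = 1 := by
          refine Finset.prod_eq_one fun e _ => ?_
          simp only [vunit]
          by_cases hx : e = {1, 2} <;> by_cases hy : e = i <;> by_cases hz : e = j <;>
            first
            | exact absurd (hx.symm.trans hy) h1'
            | exact absurd (hx.symm.trans hz) h2'
            | exact absurd (hy.symm.trans hz) hij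
            | simp [hx, hy, hz, h1, h2, h1', h2', hij, hij', Nat.factorial]
        rw [hS, hfac,
          Finset.sum_insert (by simp [hAB, hAB.symm, hAC, hAC.symm, hBC, hBC.symm]),
          Finset.sum_insert (by simp [hAB, hAB.symm, hAC, hAC.symm, hBC, hBC.symm]),
          Finset.sum_insert (by simp [hAB, hAB.symm, hAC, hAC.symm, hBC, hBC.symm]),
          Finset.sum_insert (by simp [hAB, hAB.symm, hAC, hAC.symm, hBC, hBC.symm]),
          Finset.sum_insert (by simp [hAB, hAB.symm, hAC, hAC.symm, hBC, hBC.symm]),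
          Finset.sum_singleton]
        simp only [hA, hB, hC]
        simp [Finset.union_comm, Finset.union_left_comm, Finset.union_assoc,
          h12card, hicard, hjcard]
        ring
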